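/- Let (H, γ) be a Hermitian symplectic Hilbert space, let U ⊆ H be a closed subspace with Ann(U) := (γ(U))^⊥ contained in U, and let L ⊆ H be a Lagrangian subspace (γ(L) = L^⊥) such that the subspace L + Ann(U) is closed in H. Then: (1) U decomposes as the orthogonal direct sum Ann(U) ⊕ (U ∩ γ(U)); (2) the orthogonal projection of H onto U ∩ γ(U), restricted to L ∩ U, has kernel equal to L ∩ Ann(U) and closed range R_U(L) (hence R_U(L) is isomorphic to (L ∩ U)/(L ∩ Ann(U))); (3) γ(R_U(L)) equals the orthogonal complement of R_U(L) inside U ∩ γ(U), i.e. R_U(L) is a Lagrangian subspace of the Hilbert space U ∩ γ(U); (4) consequently the eigenspaces ker(γ − i) ∩ (U ∩ γU) and ker(γ + i) ∩ (U ∩ γU) of γ restricted to U ∩ γ(U) are isometrically isomorphic, i.e. (U ∩ γ(U), γ) is a Hermitian symplectic Hilbert space. -/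

import Mathlib

set_option maxHeartbeats 1000000 in
/-- **symplectic reduction.**  Let `(H, γ)` be a Hermitian symplectic
Hilbert space, `U ⊆ H` closed with `Ann U := (γU)^⊥ ⊆ U`, and `L` Lagrangian with
`L + Ann U` closed.  Then:
(1) `U = Ann U ⊕ (U ∩ γU)` orthogonally;
(2) the orthogonal projection onto `U ∩ γU` restricted to `L ∩ U` has kernel
    `L ∩ Ann U` and closed range `R_U(L)`;
(3) `γ(R_U(L))` is the orthogonal complement of `R_U(L)` inside `U ∩ γU`;
(4) `(U ∩ γU, γ)` is again Hermitian symplectic. -/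
theorem statement13 {H : Type*} [NormedAddCommGroup H] [InnerProductSpace ℂ H]
    [CompleteSpace H] (γ : H →L[ℂ] H)
    (hsq : γ ∘L γ = -1) (hadj : ContinuousLinearMap.adjoint γ = -γ)
    (hherm : Nonempty ((LinearMap.ker ((γ - Complex.I • (1 : H →L[ℂ] H) : H →L[ℂ] H) : H →ₗ[ℂ] H)) ≃ₗᵢ[ℂ]
        (LinearMap.ker ((γ + Complex.I • (1 : H →L[ℂ] H) : H →L[ℂ] H) : H →ₗ[ℂ] H))))
    (U L : Submodule ℂ H) (hUclosed : IsClosed (U : Set H))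
    (hAnn : (U.map (γ : H →ₗ[ℂ] H))ᗮ ≤ U)
    (hLclosed : IsClosed (L : Set H)) (hLag : L.map (γ : H →ₗ[ℂ] H) = Lᗮ)
    (hsum : IsClosed ((L ⊔ (U.map (γ : H →ₗ[ℂ] H))ᗮ : Submodule ℂ H) : Set H)) :
    ((U.map (γ : H →ₗ[ℂ] H))ᗮ ⊔ (U ⊓ U.map (γ : H →ₗ[ℂ] H)) = U ∧
      ∀ x ∈ (U.map (γ : H →ₗ[ℂ] H))ᗮ, ∀ y ∈ U ⊓ U.map (γ : H →ₗ[ℂ] H), (inner ℂ x y : ℂ) = 0) ∧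
    (∀ Pr : H →L[ℂ] H,
      (∀ x, Pr x ∈ U ⊓ U.map (γ : H →ₗ[ℂ] H)) → (∀ x, x - Pr x ∈ (U ⊓ U.map (γ : H →ₗ[ℂ] H))ᗮ) →
      ((∀ x ∈ L ⊓ U, (Pr x = 0 ↔ x ∈ L ⊓ (U.map (γ : H →ₗ[ℂ] H))ᗮ)) ∧
       IsClosed (((L ⊓ U).map (Pr : H →ₗ[ℂ] H) : Submodule ℂ H) : Set H) ∧
       ((L ⊓ U).map (Pr : H →ₗ[ℂ] H)).map (γ : H →ₗ[ℂ] H) = ((L ⊓ U).map (Pr : H →ₗ[ℂ] H))ᗮ ⊓ (U ⊓ U.map (γ : H →ₗ[ℂ] H)))) ∧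
    Nonempty
      (((LinearMap.ker ((γ - Complex.I • (1 : H →L[ℂ] H) : H →L[ℂ] H) : H →ₗ[ℂ] H)) ⊓ (U ⊓ U.map (γ : H →ₗ[ℂ] H)) :
          Submodule ℂ H) ≃ₗᵢ[ℂ]
       ((LinearMap.ker ((γ + Complex.I • (1 : H →L[ℂ] H) : H →L[ℂ] H) : H →ₗ[ℂ] H)) ⊓ (U ⊓ U.map (γ : H →ₗ[ℂ] H)) :
          Submodule ℂ H)) := by
  classical
  have hγγ : ∀ x : H, γ (γ x) = -x := by
    intro x
    have h := ContinuousLinearMap.ext_iff.mp hsq x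
    simpa using h
  have hinner : ∀ x y : H, (inner ℂ (γ x) (γ y) : ℂ) = inner ℂ x y := by
    intro x y
    rw [← ContinuousLinearMap.adjoint_inner_right, hadj]
    simp [hγγ]
  have hnorm : ∀ x : H, ‖γ x‖ = ‖x‖ := by
    intro x
    have h : ‖γ x‖ ^ 2 = ‖x‖ ^ 2 := by
      rw [← @inner_self_eq_norm_sq ℂ, ← @inner_self_eq_norm_sq ℂ, hinner]
    have h2 := congrArg Real.sqrt h
    rwa [Real.sqrt_sq (norm_nonneg _), Real.sqrt_sq (norm_nonneg _)] at h2
  have hγinj : Function.Injective γ := by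
    intro x y h
    have := congrArg γ h
    rw [hγγ, hγγ] at this
    exact neg_injective this
  have hclosedmap : ∀ S : Submodule ℂ H, IsClosed (S : Set H) → IsClosed ((S.map (γ : H →ₗ[ℂ] H)) : Set H) := by
    intro S hS
    have : ((S.map (γ : H →ₗ[ℂ] H)) : Set H) = (fun x => -γ x) ⁻¹' S := by
      ext x
      simp only [SetLike.mem_coe, Submodule.mem_map, Set.mem_preimage]
      constructor
      · rintro ⟨s, hs, rfl⟩
        simpa [hγγ] using S.neg_mem hs
      · intro hx
        exact ⟨-γ x, hx, by simp [hγγ]⟩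
    rw [this]
    exact hS.preimage (by continuity)
  -- abbreviations
  set W : Submodule ℂ H := U ⊓ U.map (γ : H →ₗ[ℂ] H) with hWdef
  set A : Submodule ℂ H := (U.map (γ : H →ₗ[ℂ] H))ᗮ with hAdef
  have hWclosed : IsClosed (W : Set H) := by
    have h : (W : Set H) = (U : Set H) ∩ (U.map (γ : H →ₗ[ℂ] H) : Set H) := rfl
    rw [h]
    exact hUclosed.inter (hclosedmap U hUclosed)
  haveI : CompleteSpace U := hUclosed.completeSpace_coe
  haveI : CompleteSpace (U.map (γ : H →ₗ[ℂ] H)) := (hclosedmap U hUclosed).completeSpace_coe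
  haveI : CompleteSpace W := hWclosed.completeSpace_coe
  haveI : CompleteSpace A := (U.map (γ : H →ₗ[ℂ] H)).isClosed_orthogonal.completeSpace_coe
  haveI : CompleteSpace (L ⊔ A : Submodule ℂ H) := hsum.completeSpace_coe
  have hAperp : Aᗮ = U.map (γ : H →ₗ[ℂ] H) := Submodule.orthogonal_orthogonal (U.map (γ : H →ₗ[ℂ] H))
  have hWU : W ≤ U := inf_le_left
  have hWγU : W ≤ U.map (γ : H →ₗ[ℂ] H) := inf_le_right
  have hAW : A ≤ Wᗮ := Submodule.orthogonal_le hWγU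
  have hUperp : Uᗮ ≤ U.map (γ : H →ₗ[ℂ] H) := by
    have := Submodule.orthogonal_le hAnn
    rwa [hAperp] at this
  -- Part 1
  have part1a : A ⊔ W = U := by
    have h := Submodule.sup_orthogonal_inf_of_hasOrthogonalProjection hAnn
    rwa [hAperp, inf_comm] at h
  have part1b : ∀ x ∈ A, ∀ y ∈ W, (inner ℂ x y : ℂ) = 0 := by
    intro x hx y hy
    exact Submodule.inner_left_of_mem_orthogonal hy.2 hx
  -- γU = Uᗮ ⊔ W
  have hsup2 : Uᗮ ⊔ W = U.map (γ : H →ₗ[ℂ] H) := by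
    have h := Submodule.sup_orthogonal_inf_of_hasOrthogonalProjection hUperp
    rwa [Submodule.orthogonal_orthogonal U] at h
  have hUWperp : ∀ x, x ∈ U → x ∈ Wᗮ → x ∈ A := by
    intro x hxU hxW
    rw [hAdef, Submodule.mem_orthogonal]
    intro z hz
    rw [← hsup2] at hz
    obtain ⟨p, hp, q, hq, rfl⟩ := Submodule.mem_sup.mp hz
    rw [inner_add_left]
    rw [Submodule.inner_left_of_mem_orthogonal hxU hp,
      Submodule.inner_right_of_mem_orthogonal hq hxW, add_zero]
  -- γ stabilizes W
  have hγW : ∀ w ∈ W, γ w ∈ W := by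
    rintro w ⟨hw1, hw2⟩
    refine ⟨?_, ⟨w, hw1, rfl⟩⟩
    obtain ⟨u, hu, rfl⟩ := hw2
    rw [ContinuousLinearMap.coe_coe, hγγ]
    exact U.neg_mem hu
  have hγA : ∀ a ∈ A, γ a ∈ Uᗮ := by
    intro a ha
    rw [Submodule.mem_orthogonal]
    intro u hu
    calc (inner ℂ u (γ a) : ℂ) = inner ℂ (γ u) (γ (γ a)) := (hinner _ _).symm
      _ = - inner ℂ (γ u) a := by rw [hγγ, inner_neg_right]
      _ = 0 := by rw [show inner ℂ (γ u) a = 0 from Submodule.inner_right_of_mem_orthogonal (Submodule.mem_map_of_mem hu) ha, neg_zero]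
  -- the reduced Lagrangian
  set R : Submodule ℂ H := (L ⊔ A) ⊓ W with hRdef
  have hRclosed : IsClosed (R : Set H) := by
    have h : (R : Set H) = ((L ⊔ A : Submodule ℂ H) : Set H) ∩ (W : Set H) := rfl
    rw [h]
    exact hsum.inter hWclosed
  haveI : CompleteSpace R := hRclosed.completeSpace_coe
  have hRW : R ≤ W := inf_le_right
  -- decomposition of elements of L ⊓ U
  have hdecomp : ∀ x ∈ L ⊓ U, ∃ a ∈ A, ∃ r ∈ R, x = a + r := by
    rintro x ⟨hxL, hxU⟩
    set a : H := (A.orthogonalProjectionOnto x : H) with ha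
    have haA : a ∈ A := (A.orthogonalProjectionOnto x).2
    have hra : x - a ∈ Aᗮ := by
      have := A.sub_starProjection_mem_orthogonal x
      rwa [Submodule.starProjection_apply] at this
    rw [hAperp] at hra
    refine ⟨a, haA, x - a, Submodule.mem_inf.mpr ⟨?_,
      Submodule.mem_inf.mpr ⟨U.sub_mem hxU (hAnn haA), hra⟩⟩, by abel⟩
    exact Submodule.mem_sup.mpr ⟨x, hxL, -a, A.neg_mem haA, by abel⟩
  have hRsub : ∀ r ∈ R, ∃ l ∈ L ⊓ U, ∃ a ∈ A, r = l + a := by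
    rintro r ⟨hrLA, hrW⟩
    obtain ⟨l, hl, a, ha, rfl⟩ := Submodule.mem_sup.mp hrLA
    exact ⟨l, ⟨hl, by simpa using U.sub_mem (hWU hrW) (hAnn ha)⟩, a, ha, rfl⟩
  -- key : R is Lagrangian in W
  have hkey : R.map (γ : H →ₗ[ℂ] H) = Rᗮ ⊓ W := by
    apply le_antisymm
    · rintro _ ⟨r, hr, rfl⟩
      refine Submodule.mem_inf.mpr ⟨?_, hγW r (hRW hr)⟩
      rw [Submodule.mem_orthogonal]
      intro s hs
      obtain ⟨l1, hl1, a1, ha1, rfl⟩ := hRsub r hr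
      obtain ⟨l2, hl2, a2, ha2, rfl⟩ := hRsub s hs
      rw [map_add, inner_add_left, inner_add_right, inner_add_right]
      have t1 : (inner ℂ l2 (γ l1) : ℂ) = 0 := by
        have : γ l1 ∈ Lᗮ := hLag ▸ Submodule.mem_map_of_mem hl1.1
        exact Submodule.inner_right_of_mem_orthogonal hl2.1 this
      have t2 : (inner ℂ l2 (γ a1) : ℂ) = 0 :=
        Submodule.inner_right_of_mem_orthogonal hl2.2 (hγA a1 ha1)
      have t3 : (inner ℂ a2 (γ l1) : ℂ) = 0 :=
        Submodule.inner_left_of_mem_orthogonal (Submodule.mem_map_of_mem hl1.2) ha2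
      have t4 : (inner ℂ a2 (γ a1) : ℂ) = 0 :=
        Submodule.inner_right_of_mem_orthogonal (hAnn ha2) (hγA a1 ha1)
      rw [ContinuousLinearMap.coe_coe, t1, t2, t3, t4]; ring
    · rintro w ⟨hwo, hwW⟩
      refine Submodule.mem_map.mpr
        ⟨-γ w, Submodule.mem_inf.mpr ⟨?_, W.neg_mem (hγW w hwW)⟩, by simp [hγγ]⟩
      have hLA : (L ⊔ A) = ((L ⊔ A)ᗮ)ᗮ := (Submodule.orthogonal_orthogonal _).symm
      rw [hLA, Submodule.mem_orthogonal]
      intro z hz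
      have hzL : z ∈ Lᗮ := Submodule.orthogonal_le le_sup_left hz
      have hzA : z ∈ Aᗮ := Submodule.orthogonal_le le_sup_right hz
      rw [← hLag] at hzL
      obtain ⟨l, hlL, rfl⟩ := hzL
      rw [hAperp] at hzA
      obtain ⟨u, huU, hu⟩ := hzA
      have hlU : l ∈ U := by rwa [← hγinj hu]
      obtain ⟨a, ha, r, hr, hlar⟩ := hdecomp l ⟨hlL, hlU⟩
      calc (inner ℂ (γ l) (-γ w) : ℂ) = - inner ℂ (γ l) (γ w) := by rw [inner_neg_right]
        _ = - inner ℂ l w := by rw [hinner]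
        _ = -(inner ℂ a w + inner ℂ r w) := by rw [← inner_add_left, ← hlar]
        _ = 0 := by
            rw [Submodule.inner_left_of_mem_orthogonal hwW (hAW ha),
              Submodule.inner_right_of_mem_orthogonal hr hwo]
            ring
  refine ⟨⟨part1a, part1b⟩, ?_, ?_⟩
  · -- Part 2
    intro Pr hPr1 hPr2
    have hPrid : ∀ w ∈ W, Pr w = w := by
      intro w hw
      have h1 : w - Pr w ∈ W := W.sub_mem hw (hPr1 w)
      have h2 : w - Pr w ∈ Wᗮ := hPr2 w
      have := Submodule.mem_bot ℂ |>.mp (W.orthogonal_disjoint.le_bot ⟨h1, h2⟩)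
      rw [sub_eq_zero] at this
      exact this.symm
    have hPr0 : ∀ a ∈ Wᗮ, Pr a = 0 := by
      intro a ha
      have h1 : Pr a ∈ W := hPr1 a
      have h2 : Pr a ∈ Wᗮ := by
        have := Wᗮ.sub_mem ha (hPr2 a)
        simpa using this
      exact Submodule.mem_bot ℂ |>.mp (W.orthogonal_disjoint.le_bot ⟨h1, h2⟩)
    have hrange : (L ⊓ U).map (Pr : H →ₗ[ℂ] H) = R := by
      apply le_antisymm
      · rintro _ ⟨x, hx, rfl⟩
        refine ⟨?_, hPr1 x⟩
        have hxPr : x - Pr x ∈ A :=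
          hUWperp _ (U.sub_mem hx.2 (hWU (hPr1 x))) (hPr2 x)
        exact Submodule.mem_sup.mpr ⟨x, hx.1, -(x - Pr x), A.neg_mem hxPr, by abel⟩
      · intro r hr
        obtain ⟨l, hl, a, ha, hreq⟩ := hRsub r hr
        refine ⟨l, hl, ?_⟩
        have : Pr l = Pr r - Pr a := by
          rw [show l = r - a by rw [hreq]; abel, map_sub]
        rw [ContinuousLinearMap.coe_coe, this, hPrid r (hRW hr), hPr0 a (hAW ha), sub_zero]
    refine ⟨?_, by rw [hrange]; exact hRclosed, by rw [hrange]; exact hkey⟩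
    intro x hx
    constructor
    · intro h0
      have hxW : x ∈ Wᗮ := by simpa [h0] using hPr2 x
      exact ⟨hx.1, hUWperp x hx.2 hxW⟩
    · intro hxA
      exact hPr0 x (hAW hxA.2)
  · -- Part 4
    have hγR : ∀ y ∈ R, γ y ∈ Rᗮ := by
      intro y hy
      have h : γ y ∈ Rᗮ ⊓ W := hkey ▸ Submodule.mem_map_of_mem hy
      exact h.1
    have htriv : ∀ v ∈ R, v ∈ Rᗮ → v = 0 := by
      intro v hv hv'
      have h : (inner ℂ v v : ℂ) = 0 := Submodule.inner_right_of_mem_orthogonal hv hv'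
      exact inner_self_eq_zero.mp h
    have hsupW : R ⊔ (Rᗮ ⊓ W) = W := Submodule.sup_orthogonal_inf_of_hasOrthogonalProjection hRW
    have hdecW : ∀ e ∈ W, ∃ x ∈ R, ∃ y ∈ R, e = x + γ y := by
      intro e he
      rw [← hsupW] at he
      obtain ⟨p, hp, q, hq, rfl⟩ := Submodule.mem_sup.mp he
      rw [← hkey] at hq
      obtain ⟨y, hy, rfl⟩ := hq
      exact ⟨p, hp, y, hy, rfl⟩
    have hmemp : ∀ v : H, v ∈ LinearMap.ker ((γ - Complex.I • (1 : H →L[ℂ] H) : H →L[ℂ] H) : H →ₗ[ℂ] H) ↔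
        γ v = Complex.I • v := by
      intro v
      rw [LinearMap.mem_ker]
      simp [ContinuousLinearMap.sub_apply, ContinuousLinearMap.smul_apply,
        ContinuousLinearMap.one_apply, sub_eq_zero]
    have hmemm : ∀ v : H, v ∈ LinearMap.ker ((γ + Complex.I • (1 : H →L[ℂ] H) : H →L[ℂ] H) : H →ₗ[ℂ] H) ↔
        γ v = -(Complex.I • v) := by
      intro v
      rw [LinearMap.mem_ker]
      simp [ContinuousLinearMap.add_apply, ContinuousLinearMap.smul_apply,
        ContinuousLinearMap.one_apply, add_eq_zero_iff_eq_neg]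
    have hortho : ∀ x ∈ R, (inner ℂ x (γ x) : ℂ) = 0 := fun x hx =>
      Submodule.inner_right_of_mem_orthogonal hx (hγR x hx)
    have hnp : ∀ (c : ℂ), ‖c‖ = 1 → ∀ x ∈ R, ‖x + c • γ x‖ ^ 2 = 2 * ‖x‖ ^ 2 := by
      intro c hc x hx
      have h0 : (inner ℂ x (c • γ x) : ℂ) = 0 := by
        rw [inner_smul_right, hortho x hx, mul_zero]
      have h1 := norm_add_sq_eq_norm_sq_add_norm_sq_of_inner_eq_zero _ _ h0
      rw [norm_smul, hc, one_mul, hnorm] at h1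
      nlinarith [h1]
    -- membership of the image vectors
    have hmemEp : ∀ x : R, (x : H) - Complex.I • γ x ∈
        (LinearMap.ker ((γ - Complex.I • (1 : H →L[ℂ] H) : H →L[ℂ] H) : H →ₗ[ℂ] H) ⊓ W : Submodule ℂ H) := by
      intro x
      refine Submodule.mem_inf.mpr ⟨(hmemp _).mpr ?_, W.sub_mem (hRW x.2)
        (W.smul_mem _ (hγW _ (hRW x.2)))⟩
      rw [map_sub, map_smul, hγγ, smul_sub, smul_smul, Complex.I_mul_I, neg_one_smul,
        smul_neg]
      abel
    have hmemEm : ∀ x : R, (x : H) + Complex.I • γ x ∈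
        (LinearMap.ker ((γ + Complex.I • (1 : H →L[ℂ] H) : H →L[ℂ] H) : H →ₗ[ℂ] H) ⊓ W : Submodule ℂ H) := by
      intro x
      refine Submodule.mem_inf.mpr ⟨(hmemm _).mpr ?_, W.add_mem (hRW x.2)
        (W.smul_mem _ (hγW _ (hRW x.2)))⟩
      rw [map_add, map_smul, hγγ, smul_add, smul_smul, Complex.I_mul_I, neg_one_smul,
        smul_neg, neg_add]
      abel
    set Ep : Submodule ℂ H := LinearMap.ker ((γ - Complex.I • (1 : H →L[ℂ] H) : H →L[ℂ] H) : H →ₗ[ℂ] H) ⊓ W with hEp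
    set Em : Submodule ℂ H := LinearMap.ker ((γ + Complex.I • (1 : H →L[ℂ] H) : H →L[ℂ] H) : H →ₗ[ℂ] H) ⊓ W with hEm
    let lmp : R →ₗ[ℂ] Ep :=
      { toFun := fun x => ⟨(x : H) - Complex.I • γ x, hmemEp x⟩
        map_add' := by
          intro x y
          apply Subtype.ext
          show ((x + y : R) : H) - Complex.I • γ ((x + y : R) : H) = _
          rw [Submodule.coe_add, map_add, smul_add]
          show _ = ((x : H) - Complex.I • γ x) + ((y : H) - Complex.I • γ y)
          abel
        map_smul' := by
          intro c x
          apply Subtype.ext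
          show ((c • x : R) : H) - Complex.I • γ ((c • x : R) : H) = _
          rw [Submodule.coe_smul, map_smul, smul_comm]
          show _ = c • ((x : H) - Complex.I • γ x)
          rw [smul_sub, smul_comm] }
    let lmm : R →ₗ[ℂ] Em :=
      { toFun := fun x => ⟨(x : H) + Complex.I • γ x, hmemEm x⟩
        map_add' := by
          intro x y
          apply Subtype.ext
          show ((x + y : R) : H) + Complex.I • γ ((x + y : R) : H) = _
          rw [Submodule.coe_add, map_add, smul_add]
          show _ = ((x : H) + Complex.I • γ x) + ((y : H) + Complex.I • γ y)
          abel
        map_smul' := by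
          intro c x
          apply Subtype.ext
          show ((c • x : R) : H) + Complex.I • γ ((c • x : R) : H) = _
          rw [Submodule.coe_smul, map_smul, smul_comm]
          show _ = c • ((x : H) + Complex.I • γ x)
          rw [smul_add, smul_comm] }
    have keynorm : ∀ (c : ℂ), ‖c‖ = 1 → ∀ x : R, ‖(x : H) + c • γ x‖ ^ 2 = 2 * ‖(x : H)‖ ^ 2 :=
      fun c hc x => hnp c hc _ x.2
    have hinj : ∀ (c : ℂ), ‖c‖ = 1 → ∀ x : R, (x : H) + c • γ x = 0 → x = 0 := by
      intro c hc x h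
      have h3 : (0 : ℝ) = 2 * ‖(x : H)‖ ^ 2 := by
        rw [← keynorm c hc x, h, norm_zero]
        ring
      have h4 : ‖(x : H)‖ ^ 2 = 0 := by linarith
      have h5 : (x : H) = 0 := by
        rwa [pow_eq_zero_iff (two_ne_zero), norm_eq_zero] at h4
      exact Subtype.ext h5
    have hinjp : Function.Injective lmp := by
      intro x y hxy
      have hd : lmp (x - y) = 0 := by rw [map_sub, hxy, sub_self]
      have hd2 : ((x - y : R) : H) - Complex.I • γ ((x - y : R) : H) = 0 :=
        congrArg Subtype.val hd
      rw [sub_eq_add_neg, ← neg_smul] at hd2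
      have := hinj (-Complex.I) (by simp) (x - y) hd2
      rwa [sub_eq_zero] at this
    have hinjm : Function.Injective lmm := by
      intro x y hxy
      have hd : lmm (x - y) = 0 := by rw [map_sub, hxy, sub_self]
      have hd2 : ((x - y : R) : H) + Complex.I • γ ((x - y : R) : H) = 0 :=
        congrArg Subtype.val hd
      have := hinj Complex.I (by simp) (x - y) hd2
      rwa [sub_eq_zero] at this
    have hsurjp : Function.Surjective lmp := by
      rintro ⟨e, he⟩
      obtain ⟨hek, heW⟩ := Submodule.mem_inf.mp he
      obtain ⟨x, hx, y, hy, heq⟩ := hdecW e heW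
      have hge : γ e = Complex.I • e := (hmemp e).mp hek
      have h5 : γ x - y = Complex.I • x + Complex.I • γ y := by
        rw [heq, map_add, hγγ, smul_add] at hge
        rw [sub_eq_add_neg]
        exact hge
      have h6 : γ (x - Complex.I • y) = Complex.I • x + y := by
        rw [map_sub, map_smul, sub_eq_iff_eq_add.mp h5]
        abel
      have hkey2 : Complex.I • x + y = 0 := by
        refine htriv _ (R.add_mem (R.smul_mem _ hx) hy) ?_
        rw [← h6]
        exact hγR _ (R.sub_mem hx (R.smul_mem _ hy))
      have hy2 : y = -(Complex.I • x) := by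
        rw [add_comm, add_eq_zero_iff_eq_neg] at hkey2
        exact hkey2
      refine ⟨⟨x, hx⟩, ?_⟩
      apply Subtype.ext
      show (x : H) - Complex.I • γ x = e
      rw [heq, hy2, map_neg, map_smul]
      abel
    have hsurjm : Function.Surjective lmm := by
      rintro ⟨e, he⟩
      obtain ⟨hek, heW⟩ := Submodule.mem_inf.mp he
      obtain ⟨x, hx, y, hy, heq⟩ := hdecW e heW
      have hge : γ e = -(Complex.I • e) := (hmemm e).mp hek
      have h5 : γ x - y = -(Complex.I • x) - Complex.I • γ y := by
        rw [heq, map_add, hγγ, smul_add, neg_add] at hge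
        rw [sub_eq_add_neg, sub_eq_add_neg]
        exact hge
      have h6 : γ (x + Complex.I • y) = y - Complex.I • x := by
        rw [map_add, map_smul, sub_eq_iff_eq_add.mp h5]
        abel
      have hkey2 : y - Complex.I • x = 0 := by
        refine htriv _ (R.sub_mem hy (R.smul_mem _ hx)) ?_
        rw [← h6]
        exact hγR _ (R.add_mem hx (R.smul_mem _ hy))
      have hy2 : y = Complex.I • x := sub_eq_zero.mp hkey2
      refine ⟨⟨x, hx⟩, ?_⟩
      apply Subtype.ext
      show (x : H) + Complex.I • γ x = e
      rw [heq, hy2, map_smul]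
    let eqp : R ≃ₗ[ℂ] Ep := LinearEquiv.ofBijective lmp ⟨hinjp, hsurjp⟩
    let eqm : R ≃ₗ[ℂ] Em := LinearEquiv.ofBijective lmm ⟨hinjm, hsurjm⟩
    refine ⟨⟨eqp.symm.trans eqm, ?_⟩⟩
    intro e
    set x : R := eqp.symm e with hxdef
    have h1 : lmp x = e := eqp.apply_symm_apply e
    have hplus : ‖(e : H)‖ ^ 2 = 2 * ‖(x : H)‖ ^ 2 := by
      rw [← h1]
      show ‖(x : H) - Complex.I • γ x‖ ^ 2 = _
      rw [sub_eq_add_neg, ← neg_smul]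
      exact keynorm _ (by simp) x
    have hminus : ‖((eqp.symm.trans eqm) e : H)‖ ^ 2 = 2 * ‖(x : H)‖ ^ 2 := by
      show ‖(x : H) + Complex.I • γ x‖ ^ 2 = _
      exact keynorm _ (by simp) x
    have hsq : ‖((eqp.symm.trans eqm) e : H)‖ ^ 2 = ‖(e : H)‖ ^ 2 := by
      rw [hminus, hplus]
    have h2 := congrArg Real.sqrt hsq
    rwa [Real.sqrt_sq (norm_nonneg _), Real.sqrt_sq (norm_nonneg _)] at h2
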